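/- Let G be a connected undirected graph on n ≥ 2 nodes with symmetric adjacency matrix Φ (nonnegative entries, zero diagonal), Laplacian L = D − Φ, and let (j,k) be an edge of G (Φ_jk > 0). Set w = L†(e_j − e_k) ∈ R^n, where e_j, e_k are standard basis vectors. Then the maximum entry of w is attained at index j or at index k, and the minimum entry of w is attained at index j or at index k; that is, max_i w_i = max(w_j, w_k) and min_i w_i = min(w_j, w_k). -/

import Mathlib

open MeasureTheory ProbabilityTheory Filter Matrix
open scoped ENNReal NNReal BigOperators

noncomputable section

/-- Euclidean distance between two vectors in `ℝ^p`. -/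
def dist2 {p : ℕ} (a b : Fin p → ℝ) : ℝ := Real.sqrt (∑ l, (a l - b l) ^ 2)

/-- `E : Ω → ℝ^{n×p}` has independent, mean-zero rows whose sub-Gaussian norm
`‖E_i‖_{ψ₂} = sup_{‖v‖=1} inf {K > 0 : 𝔼 exp((vᵀE_i)²/K²) ≤ 2}` is at most `σ`. -/
def HasIndepSubGaussianRows {Ω : Type} [MeasurableSpace Ω] (μ : Measure Ω)
    {n p : ℕ} (E : Ω → Matrix (Fin n) (Fin p) ℝ) (σ : ℝ) : Prop :=
  iIndepFun (fun i ω => E ω i) μ ∧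
  (∀ i l, ∫ ω, E ω i l ∂μ = 0) ∧
  (∀ i, ∀ v : Fin p → ℝ, ∑ l, (v l) ^ 2 = 1 → ∀ K : ℝ, σ < K →
    ∫ ω, Real.exp ((∑ l, v l * E ω i l) ^ 2 / K ^ 2) ∂μ ≤ 2)

/-- Index type for the potential edges `{(j,k) : j < k}` of a graph on `Fin n`. -/
abbrev EdgeIdx (n : ℕ) := {e : Fin n × Fin n // e.1 < e.2}

/-- Oriented edge-incidence matrix of the affinity matrix `Φ`: the column indexed by a
pair `(j,k)` with `j < k` has entry `√Φ_jk` in row `j`, `-√Φ_jk` in row `k` and zeros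
elsewhere (pairs that are not edges contribute zero columns). -/
def incidence {n : ℕ} (Φ : Matrix (Fin n) (Fin n) ℝ) : Matrix (Fin n) (EdgeIdx n) ℝ :=
  Matrix.of fun i e =>
    if i = e.val.1 then Real.sqrt (Φ e.val.1 e.val.2)
    else if i = e.val.2 then -Real.sqrt (Φ e.val.1 e.val.2) else 0

/-- The four Penrose conditions: `B` is the Moore–Penrose pseudoinverse of `A`. -/
def IsPInv {m n : Type} [Fintype m] [Fintype n]
    (A : Matrix m n ℝ) (B : Matrix n m ℝ) : Prop :=
  A * B * A = A ∧ B * A * B = B ∧ (A * B)ᵀ = A * B ∧ (B * A)ᵀ = B * A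

/-- Maximal absolute entry `‖M‖_max` of a matrix. -/
def maxEntry {m n : Type} [Fintype m] [Fintype n] (M : Matrix m n ℝ) : ℝ :=
  ⨆ i, ⨆ j, |M i j|

/-- The graph whose edges are the pairs with strictly positive affinity. -/
def graphOf {n : ℕ} (Φ : Matrix (Fin n) (Fin n) ℝ) : SimpleGraph (Fin n) :=
  SimpleGraph.fromRel fun i j => 0 < Φ i j

/-- A valid affinity matrix: symmetric, nonnegative entries, zero diagonal, connected. -/
def IsValidAffinity {n : ℕ} (Φ : Matrix (Fin n) (Fin n) ℝ) : Prop :=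
  Φᵀ = Φ ∧ (∀ i j, 0 ≤ Φ i j) ∧ (∀ i, Φ i i = 0) ∧ (graphOf Φ).Connected

/-- The convex clustering penalty `Σ_{i<j} √Φ_ij ‖U_{i·} - U_{j·}‖₂`. -/
def penaltySum {n p : ℕ} (Φ : Matrix (Fin n) (Fin n) ℝ)
    (U : Matrix (Fin n) (Fin p) ℝ) : ℝ :=
  ∑ e : EdgeIdx n, Real.sqrt (Φ e.val.1 e.val.2) * dist2 (U e.val.1) (U e.val.2)

/-- The convex clustering objective
`U ↦ γ Σ_{i<j} √Φ_ij ‖U_{i·} - U_{j·}‖₂ + (1/2) ‖U - X‖_F²`. -/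
def ccObj {n p : ℕ} (γ : ℝ) (Φ : Matrix (Fin n) (Fin n) ℝ)
    (X U : Matrix (Fin n) (Fin p) ℝ) : ℝ :=
  γ * penaltySum Φ U + (1 / 2) * ∑ i, ∑ l, (U i l - X i l) ^ 2

/-- Diameter `max_{a,b ∈ C} ‖a - b‖₂` of a finite set of centers. -/
def diamC {p : ℕ} (C : Finset (Fin p → ℝ)) : ℝ :=
  ⨆ a : C, ⨆ b : C, dist2 a.val b.val

/-- Graph Laplacian `L = D - Φ`. -/
def lap {n : ℕ} (Φ : Matrix (Fin n) (Fin n) ℝ) : Matrix (Fin n) (Fin n) ℝ :=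
  Matrix.diagonal (fun i => ∑ j, Φ i j) - Φ

/-- Two-cluster membership (clusters `{0,…,n/2-1}` and `{n/2,…,n-1}`). -/
def sameCluster {n : ℕ} (i j : Fin n) : Prop := ((i : ℕ) < n / 2 ↔ (j : ℕ) < n / 2)

instance {n : ℕ} (i j : Fin n) : Decidable (sameCluster i j) := by
  unfold sameCluster; infer_instance

/-- `Φ` is the adjacency matrix of the two-cluster stochastic block model with
within-cluster probability `pw` and between-cluster probability `pb`. -/
def IsSBM {Ω : Type} [MeasurableSpace Ω] (μ : Measure Ω) {n : ℕ}
    (Φ : Ω → Matrix (Fin n) (Fin n) ℝ) (pw pb : ℝ) : Prop :=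
  (∀ ω, (Φ ω)ᵀ = Φ ω) ∧ (∀ ω i, Φ ω i i = 0) ∧
  (∀ ω i j, Φ ω i j = 0 ∨ Φ ω i j = 1) ∧
  iIndepFun (fun (e : EdgeIdx n) ω => Φ ω e.val.1 e.val.2) μ ∧
  (∀ e : EdgeIdx n, μ {ω | Φ ω e.val.1 e.val.2 = 1} =
      ENNReal.ofReal (if sameCluster e.val.1 e.val.2 then pw else pb))

/-- The matrix whose first `n/2` rows equal `c₁` and remaining rows equal `c₂`. -/
def twoClusterU (n : ℕ) {p : ℕ} (c₁ c₂ : Fin p → ℝ) : Matrix (Fin n) (Fin p) ℝ :=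
  Matrix.of fun i l => if (i : ℕ) < n / 2 then c₁ l else c₂ l

/-- `Σ_{(i,j) ∈ E} Φ_ij ‖U_{i·} - U_{j·}‖₂` (for a 0/1 matrix `Φ`, the sum of
`‖U_{i·} - U_{j·}‖₂` over the edges `i < j` with `Φ_ij = 1`). -/
def cutSum {n p : ℕ} (Φv : Matrix (Fin n) (Fin n) ℝ)
    (U : Matrix (Fin n) (Fin p) ℝ) : ℝ :=
  ∑ e : EdgeIdx n, Φv e.val.1 e.val.2 * dist2 (U e.val.1) (U e.val.2)

/-- Adjacency matrix of the advantageous two-clique graph `G(n,k)`: two cliques on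
`{0,…,n/2-1}` and `{n/2,…,n-1}` together with the `k` bridges `{i, i+n/2}`, `i < k`. -/
def advPhi (n k : ℕ) : Matrix (Fin n) (Fin n) ℝ :=
  Matrix.of fun i j =>
    if i ≠ j ∧ (((i : ℕ) < n / 2 ∧ (j : ℕ) < n / 2) ∨
        (n / 2 ≤ (i : ℕ) ∧ n / 2 ≤ (j : ℕ)) ∨
        ((j : ℕ) = (i : ℕ) + n / 2 ∧ (i : ℕ) < k) ∨
        ((i : ℕ) = (j : ℕ) + n / 2 ∧ (j : ℕ) < k))
    then 1 else 0

/-- The `n×n` matrix `(1/n) 1_n 1_nᵀ`. -/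
def onesProj (n : ℕ) : Matrix (Fin n) (Fin n) ℝ :=
  Matrix.of fun _ _ => (1 : ℝ) / n

/-- Expected adjacency matrix `B ⊗ J - p_w I_n` of the two-cluster stochastic block
model (clusters being the first and last `n/2` indices). -/
def sbmExpected (n : ℕ) (pw pb : ℝ) : Matrix (Fin n) (Fin n) ℝ :=
  Matrix.of fun i j =>
    (if ((i : ℕ) < n / 2 ↔ (j : ℕ) < n / 2) then pw else pb) -
      (if i = j then pw else 0)

end
lemma lap_mulVec_apply {n : ℕ} (Φ : Matrix (Fin n) (Fin n) ℝ)
    (v : Fin n → ℝ) (i : Fin n) :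
    (lap Φ *ᵥ v) i = ∑ l, Φ i l * (v i - v l) := by
  simp only [lap, Matrix.mulVec, dotProduct, Matrix.sub_apply,
    Matrix.diagonal_apply, sub_mul, ite_mul, zero_mul, Finset.sum_sub_distrib,
    Finset.sum_ite_eq, Finset.mem_univ, if_true, mul_sub, Finset.sum_mul]


lemma lapA {n : ℕ} (Φ : Matrix (Fin n) (Fin n) ℝ)
    (hsym : Φᵀ = Φ) (hnn : ∀ i j, 0 ≤ Φ i j)
    (hconn : (graphOf Φ).Connected)
    (v : Fin n → ℝ) (j : Fin n)
    (h : ∀ i, i ≠ j → (lap Φ *ᵥ v) i ≤ 0) :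
    ∀ i, v i ≤ v j := by
  have : Nonempty (Fin n) := ⟨j⟩
  obtain ⟨i0, hi0⟩ := Finite.exists_max v
  -- local step
  have local_step : ∀ i, i ≠ j → v i = v i0 → ∀ l, (graphOf Φ).Adj i l → v l = v i0 := by
    intro i hij hvi l hadj
    have hsum : ∑ l, Φ i l * (v i - v l) ≤ 0 := by
      rw [← lap_mulVec_apply]; exact h i hij
    have hterm : ∀ l ∈ Finset.univ, 0 ≤ Φ i l * (v i - v l) := by
      intro l _
      exact mul_nonneg (hnn i l) (by rw [hvi]; linarith [hi0 l])
    have hzero : ∀ l ∈ Finset.univ, Φ i l * (v i - v l) = 0 := by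
      rw [← Finset.sum_eq_zero_iff_of_nonneg hterm]
      exact le_antisymm hsum (Finset.sum_nonneg hterm)
    have hΦ : 0 < Φ i l := by
      rcases hadj with ⟨hne, h1 | h1⟩
      · exact h1
      · have h2 : Φᵀ i l = Φ i l := congrFun (congrFun hsym i) l
        have : Φ l i = Φ i l := h2
        linarith
    have := hzero l (Finset.mem_univ l)
    have : v i - v l = 0 := by
      rcases mul_eq_zero.1 this with h' | h'
      · linarith
      · exact h'
    linarith [hvi ▸ this]
  -- walk induction
  have key : ∀ (i i' : Fin n) (p : (graphOf Φ).Walk i i'), i' = j → v i = v i0 → v j = v i0 := by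
    intro i i' p
    induction p with
    | nil => intro hij hv; rw [← hij]; exact hv
    | @cons a b c hadj p ih =>
      intro hcj hva
      by_cases hab : a = j
      · rw [← hab]; exact hva
      · exact ih hcj (local_step a hab hva b hadj)
  obtain ⟨p⟩ := hconn.preconnected i0 j
  have hj : v j = v i0 := key i0 j p rfl rfl
  intro i
  rw [hj]; exact hi0 i

lemma lap_sum {n : ℕ} (Φ : Matrix (Fin n) (Fin n) ℝ) (hsym : Φᵀ = Φ)
    (y : Fin n → ℝ) : ∑ i, (lap Φ *ᵥ y) i = 0 := by
  have hs : ∀ a b, Φ a b = Φ b a := fun a b => congrFun (congrFun hsym b) a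
  simp only [lap_mulVec_apply, mul_sub, Finset.sum_sub_distrib]
  rw [sub_eq_zero]
  rw [Finset.sum_comm (f := fun i l => Φ i l * y l)]
  apply Finset.sum_congr rfl
  intro l _
  apply Finset.sum_congr rfl
  intro i _
  rw [hs i l]

lemma lap_ker {n : ℕ} (Φ : Matrix (Fin n) (Fin n) ℝ)
    (hsym : Φᵀ = Φ) (hnn : ∀ i j, 0 ≤ Φ i j)
    (hconn : (graphOf Φ).Connected)
    (r : Fin n → ℝ) (hr : lap Φ *ᵥ r = 0) : ∀ a b, r a = r b := by
  intro a b
  have h0 : ∀ c, ∀ i, i ≠ c → (lap Φ *ᵥ r) i ≤ 0 := by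
    intro c i _; rw [hr]; exact le_of_eq rfl
  exact le_antisymm (lapA Φ hsym hnn hconn r b (h0 b) a)
    (lapA Φ hsym hnn hconn r a (h0 a) b)


/-- maximum principle: for an edge `(j,k)`, the extrema of
`w = L†(e_j - e_k)` are attained at `j` or `k`. -/
theorem stmt11 (n : ℕ) (hn : 2 ≤ n) (Φ : Matrix (Fin n) (Fin n) ℝ)
    (hsym : Φᵀ = Φ) (hnn : ∀ i j, 0 ≤ Φ i j) (hdiag : ∀ i, Φ i i = 0)
    (hconn : (graphOf Φ).Connected)
    (j k : Fin n) (hjk : 0 < Φ j k)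
    (M : Matrix (Fin n) (Fin n) ℝ) (hM : IsPInv (lap Φ) M) :
    ∀ w : Fin n → ℝ, w = M.mulVec (Pi.single j 1 - Pi.single k 1) →
      (⨆ i, w i) = max (w j) (w k) ∧ (⨅ i, w i) = min (w j) (w k) := by
  intro w hw
  have : Nonempty (Fin n) := ⟨j⟩
  set u : Fin n → ℝ := Pi.single j 1 - Pi.single k 1 with hu
  -- L is symmetric
  have hLsym : (lap Φ)ᵀ = lap Φ := by
    simp [lap, Matrix.transpose_sub, Matrix.diagonal_transpose, hsym]
  -- L * (L * M) = L
  have h1 : lap Φ * (Mᵀ * lap Φ) = lap Φ := by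
    have := congrArg Matrix.transpose hM.1
    simpa [Matrix.transpose_mul, hLsym, Matrix.mul_assoc] using this
  have hLLM : lap Φ * (lap Φ * M) = lap Φ := by
    conv_lhs => rw [← hM.2.2.1, Matrix.transpose_mul, hLsym]
    exact h1
  -- L w = u
  have hLw : lap Φ *ᵥ w = u := by
    have hr0 : lap Φ *ᵥ (u - (lap Φ * M) *ᵥ u) = 0 := by
      rw [Matrix.mulVec_sub, Matrix.mulVec_mulVec, hLLM]
      simp
    have hconst := lap_ker Φ hsym hnn hconn _ hr0
    have hsumr : ∑ i, (u - (lap Φ * M) *ᵥ u) i = 0 := by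
      have h2 : ∑ i, ((lap Φ * M) *ᵥ u) i = 0 := by
        rw [← Matrix.mulVec_mulVec]
        exact lap_sum Φ hsym (M *ᵥ u)
      have h3 : ∑ i, u i = 0 := by
        simp [hu, Finset.sum_sub_distrib, Pi.single_apply]
      simp [Pi.sub_apply, Finset.sum_sub_distrib, h2, h3]
    have hz : u - (lap Φ * M) *ᵥ u = 0 := by
      funext a
      have hsa : ∑ i, (u - (lap Φ * M) *ᵥ u) i = (n : ℝ) * (u - (lap Φ * M) *ᵥ u) a := by
        rw [Finset.sum_congr rfl (fun i _ => hconst i a)]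
        simp [Finset.sum_const, Finset.card_univ, mul_comm]
        ring
      rw [hsumr] at hsa
      have hn0 : (n : ℝ) ≠ 0 := by
        have : (0 : ℕ) < n := by omega
        exact_mod_cast this.ne'
      have := (mul_eq_zero.mp hsa.symm).resolve_left hn0
      simpa using this
    have h4 : (lap Φ * M) *ᵥ u = u := (sub_eq_zero.mp hz).symm
    rw [hw, Matrix.mulVec_mulVec]
    exact h4
  -- max principle hypotheses
  have hmaxh : ∀ i, i ≠ j → (lap Φ *ᵥ w) i ≤ 0 := by
    intro i hij
    rw [hLw]
    simp only [hu, Pi.sub_apply, Pi.single_apply, if_neg hij]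
    split <;> norm_num
  have hminh : ∀ i, i ≠ k → (lap Φ *ᵥ (-w)) i ≤ 0 := by
    intro i hik
    rw [Matrix.mulVec_neg, hLw]
    simp only [hu, Pi.neg_apply, Pi.sub_apply, Pi.single_apply, if_neg hik]
    split <;> norm_num
  have hmax : ∀ i, w i ≤ w j := lapA Φ hsym hnn hconn w j hmaxh
  have hmin : ∀ i, w k ≤ w i := by
    intro i
    have := lapA Φ hsym hnn hconn (-w) k hminh i
    simpa using this
  constructor
  · have hsup : ⨆ i, w i = w j :=
      le_antisymm (ciSup_le hmax) (le_ciSup (Set.Finite.bddAbove (Set.finite_range w)) j)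
    rw [hsup, max_eq_left (hmin j)]
  · have hinf : ⨅ i, w i = w k :=
      le_antisymm (ciInf_le (Set.Finite.bddBelow (Set.finite_range w)) k)
        (le_ciInf hmin)
    rw [hinf, min_eq_right (hmin j)]
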